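/- Let q be an infinite decrement matrix satisfying the consistency recursion for all b ≥ 1. If q(3:1) > 0, q(3:2) > 0 and q(3:1) + q(3:2) = 1, then for every n ≥ 3 one has q(n:1) > 0, q(n:2) > 0 and q(n:1) + q(n:2) = 1 (so q(n:k) = 0 for all 3 ≤ k ≤ n). -/
import Mathlib


open Finset MeasureTheory

/-- A composition of a positive integer: a nonempty list of positive parts. -/
def IsComposition (c : List ℕ) : Prop := c ≠ [] ∧ ∀ x ∈ c, 0 < x

/-- An infinite decrement matrix: nonnegative triangular array with rows summing to 1. -/
def IsDecrementMatrix (q : ℕ → ℕ → ℝ) : Prop :=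
  (∀ b k, 1 ≤ k → k ≤ b → 0 ≤ q b k) ∧
  ∀ b, 1 ≤ b → ∑ k ∈ Finset.Icc 1 b, q b k = 1

/-- Right-hand side of Möhle's recursion for `p` at the composition `c`, with coefficients
from the decrement matrix `q`. -/
noncomputable def mohleRHS (q : ℕ → ℕ → ℝ) (p : List ℕ → ℝ) (c : List ℕ) : ℝ :=
  q c.sum 1 / (c.sum : ℝ) *
      ∑ j ∈ Finset.range c.length, (if c.getD j 0 = 1 then p (c.eraseIdx j) else 0) +
    ∑ k ∈ Finset.Icc 2 c.sum, q c.sum k *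
      ∑ j ∈ Finset.range c.length,
        (if k ≤ c.getD j 0 then
            ((c.getD j 0).choose k : ℝ) / (c.sum.choose k : ℝ) * p (c.set j (c.getD j 0 - k + 1))
          else 0)

/-- Möhle's recursion holds for `p` at the composition `c`. -/
def MohleRec (q : ℕ → ℕ → ℝ) (p : List ℕ → ℝ) (c : List ℕ) : Prop := p c = mohleRHS q p c

/-- The (backward) consistency recursion for a decrement matrix, at level `b`. -/
def ConsistencyRec (q : ℕ → ℕ → ℝ) (b : ℕ) : Prop :=
  (∀ k, 2 ≤ k → k ≤ b →
    q b k = ((k : ℝ) + 1) / ((b : ℝ) + 1) * q (b + 1) (k + 1)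
      + ((b : ℝ) + 1 - (k : ℝ)) / ((b : ℝ) + 1) * q (b + 1) k
      + 1 / ((b : ℝ) + 1) * q (b + 1) 1 * q b k
      + 2 / ((b : ℝ) + 1) * q (b + 1) 2 * q b k) ∧
  q b 1 = (b : ℝ) / ((b : ℝ) + 1) * q (b + 1) 1
    + 1 / ((b : ℝ) + 1) * q (b + 1) 1 * q b 1
    + 2 / ((b : ℝ) + 1) * q (b + 1) 2 * q b 1

/-- A finite EPPF on compositions of `m ≤ n`: nonnegative, symmetric, normalized,
satisfying the addition rule below level `n` (with the convention `p(∅) = 1`). -/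
def IsFiniteEPPF (n : ℕ) (p : List ℕ → ℝ) : Prop :=
  p [] = 1 ∧ p [1] = 1 ∧
  (∀ c, IsComposition c → c.sum ≤ n → 0 ≤ p c) ∧
  (∀ c c', IsComposition c → c.sum ≤ n → List.Perm c c' → p c = p c') ∧
  ∀ c, IsComposition c → c.sum < n →
    p c = p (c ++ [1]) + ∑ i ∈ Finset.range c.length, p (c.set i (c.getD i 0 + 1))

/-- An infinite EPPF: nonnegative, symmetric, normalized, satisfying the addition rule. -/
def IsInfEPPF (p : List ℕ → ℝ) : Prop :=
  p [1] = 1 ∧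
  (∀ c, IsComposition c → 0 ≤ p c) ∧
  (∀ c c', IsComposition c → List.Perm c c' → p c = p c') ∧
  ∀ c, IsComposition c →
    p c = p (c ++ [1]) + ∑ i ∈ Finset.range c.length, p (c.set i (c.getD i 0 + 1))

/-- `Φ(b:k)` for the `(Λ, ρ)`-coalescent with freeze. -/
noncomputable def coalPhiK (Λ : Measure (Set.Icc (0:ℝ) 1)) (ρ : ℝ) (b k : ℕ) : ℝ :=
  if k = 1 then ρ * b
  else (b.choose k : ℝ) * ∫ x, (x : ℝ) ^ (k - 2) * (1 - (x : ℝ)) ^ (b - k) ∂Λ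

/-- `Φ(b) = ∑_{k=1}^b Φ(b:k)`, the total rate. -/
noncomputable def coalPhi (Λ : Measure (Set.Icc (0:ℝ) 1)) (ρ : ℝ) (b : ℕ) : ℝ :=
  ∑ k ∈ Finset.Icc 1 b, coalPhiK Λ ρ b k

/-- Iterated backward difference `∇^j c (n) = ∑_{i=0}^j (-1)^i C(j,i) c(n+i)`. -/
def nablaIter (c : ℕ → ℝ) (j n : ℕ) : ℝ :=
  ∑ i ∈ Finset.range (j + 1), (-1 : ℝ) ^ i * (j.choose i : ℝ) * c (n + i)

/-- `Φ̄(n) = Φ(n) - ρ n`. -/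
noncomputable def phiBar (Φ : ℕ → ℝ) (ρ : ℝ) (n : ℕ) : ℝ := Φ n - ρ * n

/-- `Ψ(n) = ∇Φ̄(n) / n`. -/
noncomputable def psiOf (Φ : ℕ → ℝ) (ρ : ℝ) (n : ℕ) : ℝ :=
  (phiBar Φ ρ n - phiBar Φ ρ (n + 1)) / n

/-- `Φ(n:1) = ρ n` and `Φ(n:m) = -C(n,m) ∇^{m-2} Ψ (n-m+1)` for `m ≥ 2`. -/
noncomputable def phiNM (Φ : ℕ → ℝ) (ρ : ℝ) (n m : ℕ) : ℝ :=
  if m = 1 then ρ * n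
  else -(n.choose m : ℝ) * nablaIter (psiOf Φ ρ) (m - 2) (n - m + 1)

/-- For a consistent infinite decrement matrix, if
`q(3:1) > 0`, `q(3:2) > 0` and `q(3:1) + q(3:2) = 1`, then for every `n ≥ 3` one has
`q(n:1) > 0`, `q(n:2) > 0`, `q(n:1) + q(n:2) = 1`, and `q(n:k) = 0` for `3 ≤ k ≤ n`
(Kingman's coalescent with freeze). -/
theorem kingman_with_freeze_case_propagates (q : ℕ → ℕ → ℝ) (hq : IsDecrementMatrix q)
    (hc : ∀ b, 1 ≤ b → ConsistencyRec q b)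
    (h1 : 0 < q 3 1) (h2 : 0 < q 3 2) (hsum : q 3 1 + q 3 2 = 1) :
    ∀ n, 3 ≤ n → 0 < q n 1 ∧ 0 < q n 2 ∧ q n 1 + q n 2 = 1 ∧
      ∀ k, 3 ≤ k → k ≤ n → q n k = 0 := by
  obtain ⟨hnn, hrow⟩ := hq
  intro n hn
  induction n, hn using Nat.le_induction with
  | base =>
    have h33 : q 3 3 = 0 := by
      have hr := hrow 3 (by norm_num)
      have : Finset.Icc 1 3 = ({1, 2, 3} : Finset ℕ) := by decide
      rw [this] at hr
      simp [Finset.sum_insert, Finset.mem_insert] at hr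
      linarith
    refine ⟨h1, h2, hsum, ?_⟩
    intro k hk hk'
    interval_cases k
    exact h33
  | succ n hn IH =>
    obtain ⟨hq1, hq2, hsumn, hzero⟩ := IH
    have hn1 : (0:ℝ) < (n:ℝ) + 1 := by positivity
    have hn1' : ((n:ℝ) + 1) ≠ 0 := ne_of_gt hn1
    have hncast : (3:ℝ) ≤ (n:ℝ) := by exact_mod_cast hn
    have hcr := hc n (by omega)
    have hz : ∀ k, 3 ≤ k → k ≤ n → q (n+1) k = 0 ∧ q (n+1) (k+1) = 0 := by
      intro k h3 hkn
      have hrec := hcr.1 k (by omega) hkn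
      rw [hzero k h3 hkn] at hrec
      have ha : 0 ≤ q (n+1) (k+1) := hnn _ _ (by omega) (by omega)
      have hb : 0 ≤ q (n+1) k := hnn _ _ (by omega) (by omega)
      have hca : (0:ℝ) < ((k:ℝ) + 1) / ((n:ℝ) + 1) := by positivity
      have hkcast : (k:ℝ) ≤ (n:ℝ) := by exact_mod_cast hkn
      have hcb : (0:ℝ) < ((n:ℝ) + 1 - (k:ℝ)) / ((n:ℝ) + 1) := by
        apply div_pos <;> linarith
      have p1 : 0 ≤ ((k:ℝ) + 1) / ((n:ℝ) + 1) * q (n+1) (k+1) := mul_nonneg hca.le ha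
      have p2 : 0 ≤ ((n:ℝ) + 1 - (k:ℝ)) / ((n:ℝ) + 1) * q (n+1) k := mul_nonneg hcb.le hb
      have e1 : ((k:ℝ) + 1) / ((n:ℝ) + 1) * q (n+1) (k+1) = 0 := by linarith
      have e2 : ((n:ℝ) + 1 - (k:ℝ)) / ((n:ℝ) + 1) * q (n+1) k = 0 := by linarith
      constructor
      · rcases mul_eq_zero.mp e2 with h | h
        · exact absurd h (ne_of_gt hcb)
        · exact h
      · rcases mul_eq_zero.mp e1 with h | h
        · exact absurd h (ne_of_gt hca)
        · exact h
    have hz1 : ∀ k, 3 ≤ k → k ≤ n + 1 → q (n+1) k = 0 := by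
      intro k h3 hk
      by_cases h : k ≤ n
      · exact (hz k h3 h).1
      · have : k = n + 1 := by omega
        subst this
        exact (hz n (by omega) le_rfl).2
    have hsum' : q (n+1) 1 + q (n+1) 2 = 1 := by
      have hr := hrow (n+1) (by omega)
      have hset : Finset.Icc 1 (n+1) = insert 1 (insert 2 (Finset.Icc 3 (n+1))) := by
        ext x; simp [Finset.mem_Icc, Finset.mem_insert]; omega
      rw [hset, Finset.sum_insert (by simp [Finset.mem_Icc]),
        Finset.sum_insert (by simp [Finset.mem_Icc])] at hr
      have : ∑ k ∈ Finset.Icc 3 (n+1), q (n+1) k = 0 := by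
        apply Finset.sum_eq_zero
        intro k hk
        rw [Finset.mem_Icc] at hk
        exact hz1 k hk.1 hk.2
      linarith
    have hnn1 : 0 ≤ q (n+1) 1 := hnn _ _ (by omega) (by omega)
    have hnn2 : 0 ≤ q (n+1) 2 := hnn _ _ (by omega) (by omega)
    have hb1 : q (n+1) 1 ≤ 1 := by linarith
    have hb2 : q (n+1) 2 ≤ 1 := by linarith
    have h3z : q (n+1) 3 = 0 := hz1 3 le_rfl (by omega)
    -- positivity of q (n+1) 2
    have hrec2 := hcr.1 2 le_rfl (by omega)
    rw [h3z] at hrec2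
    push_cast at hrec2
    field_simp at hrec2
    have hpos2 : 0 < q (n+1) 2 := by
      nlinarith [mul_nonneg (sub_nonneg.mpr hb1) hq2.le,
        mul_nonneg (sub_nonneg.mpr hb2) hq2.le, hq2, hnn2]
    -- positivity of q (n+1) 1
    have hrec1 := hcr.2
    field_simp at hrec1
    have hpos1 : 0 < q (n+1) 1 := by
      nlinarith [mul_nonneg (sub_nonneg.mpr hb1) hq1.le,
        mul_nonneg (sub_nonneg.mpr hb2) hq1.le, hq1, hnn1]
    exact ⟨hpos1, hpos2, hsum', hz1⟩
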